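/- (Theorem 2, count bound.) Let ℓ^t = w_t·ℓ̲ + (1 − w_t)·ℓ̄ be the boundary-design games, let (Ω, ℱ, ℙ) be a probability space, and let a^1,…,a^T : Ω → 𝒜 be random action profiles. Then for every player i, the expected count N_i^T = #{t ≤ T : a^t_i = a†_i} satisfies E[N_i^T] ≥ T − (M / ((M−1)·ρ))·E[R_i^T]·T^{1−c} − (1/c)·T^{1−c}, where R_i^T is the best-in-hindsight regret with respect to the loss sequence ℓ^1,…,ℓ^T. Consequently, if E[R_i^T] ≤ R̄ for all i, then T − E[N^T] ≤ M·((M/((M−1)·ρ))·R̄ + 1/c)·T^{1−c}, where N^T = #{t ≤ T : a^t = a†}. -/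

import Mathlib

open Finset MeasureTheory

lemma bdcb_integrable {β Ω : Type} [Fintype β] [Nonempty β] [MeasurableSpace β]
    [MeasurableSingletonClass β] [MeasurableSpace Ω] (P : Measure Ω) [IsFiniteMeasure P]
    {Φ : Ω → β} (hΦ : Measurable Φ) (g : β → ℝ) :
    Integrable (fun ω => g (Φ ω)) P :=
  ⟨((measurable_of_countable g).comp hΦ).aestronglyMeasurable,
    HasFiniteIntegral.of_bounded (C := Finset.univ.sup' Finset.univ_nonempty fun x => ‖g x‖)
      (ae_of_all _ fun ω => Finset.le_sup' (fun x => ‖g x‖) (Finset.mem_univ (Φ ω)))⟩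

theorem boundary_design_count_bound
    {M : ℕ} (hM : 2 ≤ M)
    {A : Fin M → Type} [∀ i, Fintype (A i)] [∀ i, Nonempty (A i)]
    [∀ i, DecidableEq (A i)]
    (L U : ℝ) (hLU : L < U)
    (adag : ∀ i, A i)
    (ρ : ℝ) (hρ0 : 0 < ρ) (hρU : ρ ≤ (U - L) / 2)
    (ℓo : (∀ i, A i) → Fin M → ℝ)
    (hℓo : ∀ i, ℓo adag i ∈ Set.Icc (L + ρ) (U - ρ))
    (v : Fin M → ℝ) (hv : ∀ i, v i ∈ Set.Icc (L + ρ) (U - ρ))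
    (ℓund : (∀ i, A i) → Fin M → ℝ)
    (hℓund : ∀ a i, ℓund a i =
      if a i = adag i
      then v i - (1 - ((univ.filter fun j => a j = adag j).card : ℝ) / M) * ρ
      else v i + (((univ.filter fun j => a j = adag j).card : ℝ) / M) * ρ)
    (c : ℝ) (hc : c ∈ Set.Ioc (0 : ℝ) 1)
    (ℓt : ℕ → (∀ i, A i) → Fin M → ℝ)
    (hℓt : ∀ (t : ℕ) (a : ∀ i, A i) (i : Fin M), ℓt t a i =
      (t : ℝ) ^ (c - 1) * ℓund a i + (1 - (t : ℝ) ^ (c - 1)) * ℓo adag i)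
    {Ω : Type} [MeasurableSpace Ω] (P : Measure Ω) [IsProbabilityMeasure P]
    [∀ i, MeasurableSpace (A i)] [∀ i, MeasurableSingletonClass (A i)]
    (T : ℕ) (hT : 1 ≤ T) (ap : ℕ → Ω → ∀ j, A j)
    (hmeas : ∀ t, Measurable (ap t))
    (R : Fin M → Ω → ℝ)
    (hR : ∀ i ω, R i ω =
      (∑ t ∈ Finset.Icc 1 T, ℓt t (ap t ω) i)
        - univ.inf' univ_nonempty
            (fun b : A i => ∑ t ∈ Finset.Icc 1 T, ℓt t (Function.update (ap t ω) i b) i)) :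
    (∀ i : Fin M,
      (T : ℝ) - ((M : ℝ) / (((M : ℝ) - 1) * ρ)) * (∫ ω, R i ω ∂P) * (T : ℝ) ^ (1 - c)
          - (1 / c) * (T : ℝ) ^ (1 - c)
        ≤ ∫ ω, (((Finset.Icc 1 T).filter fun t => ap t ω i = adag i).card : ℝ) ∂P)
    ∧ (∀ Rbar : ℝ, (∀ i, ∫ ω, R i ω ∂P ≤ Rbar) →
        (T : ℝ) - ∫ ω, (((Finset.Icc 1 T).filter fun t => ap t ω = adag).card : ℝ) ∂P
          ≤ (M : ℝ) * (((M : ℝ) / (((M : ℝ) - 1) * ρ)) * Rbar + 1 / c)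
              * (T : ℝ) ^ (1 - c)) := by
  obtain ⟨hc0, hc1⟩ := hc
  have hM1 : (1:ℝ) ≤ (M:ℝ) - 1 := by
    have : (2:ℝ) ≤ (M:ℝ) := by exact_mod_cast hM
    linarith
  have hMpos : (0:ℝ) < (M:ℝ) := by linarith
  have hMne : (M:ℝ) ≠ 0 := ne_of_gt hMpos
  have hTpos : (0:ℝ) < (T:ℝ) := by exact_mod_cast hT
  set D : ℝ := ρ * ((M:ℝ) - 1) / M with hD
  have hDpos : 0 < D := by
    apply div_pos (mul_pos hρ0 (by linarith)) hMpos
  set κ0 : ℝ := (M:ℝ) / (((M:ℝ) - 1) * ρ) with hκ0def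
  have hκ0pos : 0 < κ0 := div_pos hMpos (mul_pos (by linarith) hρ0)
  set κ : ℝ := κ0 * (T:ℝ) ^ (1 - c) with hκdef
  have hκpos : 0 < κ := mul_pos hκ0pos (Real.rpow_pos_of_pos hTpos _)
  have hunit : κ * ((T:ℝ) ^ (c-1) * D) = 1 := by
    have h1 : (T:ℝ) ^ (1-c) * (T:ℝ) ^ (c-1) = 1 := by
      rw [← Real.rpow_add hTpos]
      norm_num
    have h2 : κ0 * D = 1 := by
      rw [hκ0def, hD]
      field_simp
    calc κ * ((T:ℝ) ^ (c-1) * D) = (κ0 * D) * ((T:ℝ) ^ (1-c) * (T:ℝ) ^ (c-1)) := by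
          rw [hκdef]; ring
      _ = 1 := by rw [h1, h2, mul_one]
  -- abbreviations
  set Ni : Fin M → Ω → ℝ :=
    fun i ω => (((Finset.Icc 1 T).filter fun t => ap t ω i = adag i).card : ℝ) with hNidef
  set N : Ω → ℝ :=
    fun ω => (((Finset.Icc 1 T).filter fun t => ap t ω = adag).card : ℝ) with hNdef
  have hTc : (Finset.Icc 1 T).card = T := by rw [Nat.card_Icc]; omega
  -- measurability / integrability via factoring through a finite space
  haveI : MeasurableSingletonClass (Fin (T+1) → ∀ j, A j) := inferInstance
  set Φ : Ω → (Fin (T+1) → ∀ j, A j) := fun ω t => ap (t : ℕ) ω with hΦdef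
  have hΦ : Measurable Φ := measurable_pi_lambda _ fun t => hmeas t
  set ev : ℕ → (Fin (T+1) → ∀ j, A j) → (∀ j, A j) :=
    fun t x => x ⟨t % (T+1), Nat.mod_lt _ (Nat.succ_pos T)⟩ with hevdef
  have hev : ∀ t ∈ Finset.Icc 1 T, ∀ ω, ev t (Φ ω) = ap t ω := by
    intro t ht ω
    rw [Finset.mem_Icc] at ht
    have hmod : t % (T+1) = t := Nat.mod_eq_of_lt (by omega)
    simp only [hevdef, hΦdef, hmod]
  have hfac : ∀ (f : Ω → ℝ), (∃ g : (Fin (T+1) → ∀ j, A j) → ℝ, ∀ ω, f ω = g (Φ ω)) → Integrable f P := by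
    rintro f ⟨g, hg⟩
    have : f = fun ω => g (Φ ω) := funext hg
    rw [this]
    exact bdcb_integrable P hΦ g
  have hRint : ∀ i, Integrable (R i) P := by
    intro i
    refine hfac _ ⟨fun x => (∑ t ∈ Finset.Icc 1 T, ℓt t (ev t x) i)
        - univ.inf' univ_nonempty
            (fun b : A i => ∑ t ∈ Finset.Icc 1 T, ℓt t (Function.update (ev t x) i b) i), ?_⟩
    intro ω
    rw [hR]
    congr 1
    · exact Finset.sum_congr rfl fun t ht => by rw [← hev t ht ω]
    · congr 1
      funext b
      exact Finset.sum_congr rfl fun t ht => by rw [← hev t ht ω]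
  have hNiint : ∀ i, Integrable (Ni i) P := by
    intro i
    refine hfac _ ⟨fun x => (((Finset.Icc 1 T).filter fun t => ev t x i = adag i).card : ℝ), ?_⟩
    intro ω
    simp only [hNidef]
    congr 2
    exact Finset.filter_congr fun t ht => by rw [hev t ht ω]
  have hNint : Integrable N P := by
    refine hfac _ ⟨fun x => (((Finset.Icc 1 T).filter fun t => ev t x = adag).card : ℝ), ?_⟩
    intro ω
    simp only [hNdef]
    congr 2
    exact Finset.filter_congr fun t ht => by rw [hev t ht ω]
  -- pointwise key inequality
  have hpair : ∀ (p : ℕ → Prop) (hp : DecidablePred p),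
      (((Finset.Icc 1 T).filter p).card : ℝ)
        + (((Finset.Icc 1 T).filter fun t => ¬ p t).card : ℝ) = T := by
    intro p hp
    rw [← Nat.cast_add, Finset.card_filter_add_card_filter_not, hTc]
  have hA : ∀ (i : Fin M) (ω : Ω), (T:ℝ) ^ (c-1) * D * ((T:ℝ) - Ni i ω) ≤ R i ω := by
    intro i ω
    have hterm : ∀ t ∈ Finset.Icc 1 T,
        (if ap t ω i = adag i then (0:ℝ) else (T:ℝ) ^ (c-1) * D)
          ≤ ℓt t (ap t ω) i - ℓt t (Function.update (ap t ω) i (adag i)) i := by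
      intro t ht
      rw [Finset.mem_Icc] at ht
      have htpos : (0:ℝ) < (t:ℝ) := by exact_mod_cast ht.1
      by_cases h : ap t ω i = adag i
      · rw [if_pos h]
        have hupd : Function.update (ap t ω) i (adag i) = ap t ω := by
          rw [← h]; exact Function.update_eq_self i (ap t ω)
        rw [hupd]
        simp
      · rw [if_neg h, hℓt, hℓt, hℓund, hℓund, if_neg h,
          if_pos (Function.update_self i (adag i) (ap t ω))]
        have hupd : (univ.filter fun j => Function.update (ap t ω) i (adag i) j = adag j)
            = insert i (univ.filter fun j => ap t ω j = adag j) := by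
          ext j
          simp only [Finset.mem_insert, Finset.mem_filter, Finset.mem_univ, true_and]
          by_cases hj : j = i
          · subst hj; simp [Function.update_self]
          · simp [Function.update_of_ne hj, hj]
        have hnot : i ∉ univ.filter fun j => ap t ω j = adag j := by
          simp [h]
        rw [hupd, Finset.card_insert_of_notMem hnot]
        have hrw : (t:ℝ) ^ (c-1) * (v i + (((univ.filter fun j => ap t ω j = adag j).card : ℝ) / M) * ρ)
              + (1 - (t:ℝ) ^ (c-1)) * ℓo adag i
            - ((t:ℝ) ^ (c-1) * (v i - (1 - (((univ.filter fun j => ap t ω j = adag j).card + 1 : ℕ) : ℝ) / M) * ρ)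
              + (1 - (t:ℝ) ^ (c-1)) * ℓo adag i) = (t:ℝ) ^ (c-1) * D := by
          rw [hD]
          push_cast
          field_simp
          ring
        rw [hrw]
        have hle : (T:ℝ) ^ (c-1) ≤ (t:ℝ) ^ (c-1) := by
          apply Real.rpow_le_rpow_of_nonpos htpos (by exact_mod_cast ht.2) (by linarith)
        exact mul_le_mul_of_nonneg_right hle hDpos.le
    have hsum : ∑ t ∈ Finset.Icc 1 T, (if ap t ω i = adag i then (0:ℝ) else (T:ℝ) ^ (c-1) * D)
        = (T:ℝ) ^ (c-1) * D * ((T:ℝ) - Ni i ω) := by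
      rw [Finset.sum_ite, Finset.sum_const_zero, Finset.sum_const, zero_add, nsmul_eq_mul]
      have h := hpair (fun t => ap t ω i = adag i) (by infer_instance)
      have hneg : (((Finset.Icc 1 T).filter fun t => ¬ ap t ω i = adag i).card : ℝ)
          = (T:ℝ) - Ni i ω := by
        simp only [hNidef]; linarith [h]
      rw [hneg]; ring
    have hinf : univ.inf' univ_nonempty
          (fun b : A i => ∑ t ∈ Finset.Icc 1 T, ℓt t (Function.update (ap t ω) i b) i)
        ≤ ∑ t ∈ Finset.Icc 1 T, ℓt t (Function.update (ap t ω) i (adag i)) i :=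
      Finset.inf'_le _ (Finset.mem_univ _)
    calc (T:ℝ) ^ (c-1) * D * ((T:ℝ) - Ni i ω)
        = ∑ t ∈ Finset.Icc 1 T, (if ap t ω i = adag i then (0:ℝ) else (T:ℝ) ^ (c-1) * D) :=
          hsum.symm
      _ ≤ ∑ t ∈ Finset.Icc 1 T,
            (ℓt t (ap t ω) i - ℓt t (Function.update (ap t ω) i (adag i)) i) :=
          Finset.sum_le_sum hterm
      _ = (∑ t ∈ Finset.Icc 1 T, ℓt t (ap t ω) i)
            - ∑ t ∈ Finset.Icc 1 T, ℓt t (Function.update (ap t ω) i (adag i)) i :=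
          Finset.sum_sub_distrib _ _
      _ ≤ R i ω := by rw [hR]; linarith [hinf]
  have hA' : ∀ (i : Fin M) (ω : Ω), (T:ℝ) - Ni i ω ≤ κ * R i ω := by
    intro i ω
    have h1 := mul_le_mul_of_nonneg_left (hA i ω) hκpos.le
    calc (T:ℝ) - Ni i ω
        = κ * ((T:ℝ) ^ (c-1) * D) * ((T:ℝ) - Ni i ω) := by rw [hunit, one_mul]
      _ = κ * ((T:ℝ) ^ (c-1) * D * ((T:ℝ) - Ni i ω)) := by ring
      _ ≤ κ * R i ω := h1
  have hNile : ∀ (i : Fin M) (ω : Ω), Ni i ω ≤ (T:ℝ) := by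
    intro i ω
    simp only [hNidef]
    calc (((Finset.Icc 1 T).filter fun t => ap t ω i = adag i).card : ℝ)
        ≤ ((Finset.Icc 1 T).card : ℝ) := by exact_mod_cast Finset.card_filter_le _ _
      _ = (T:ℝ) := by rw [hTc]
  have hRnn : ∀ (i : Fin M) (ω : Ω), 0 ≤ R i ω := by
    intro i ω
    have h1 := hA' i ω
    have h2 := hNile i ω
    nlinarith [hκpos]
  have hERnn : ∀ i, 0 ≤ ∫ ω, R i ω ∂P := fun i => integral_nonneg (hRnn i)
  have hTint : (T:ℝ) = ∫ (_ : Ω), (T:ℝ) ∂P := by simp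
  constructor
  · intro i
    have hint : ∫ ω, (Ni i ω + κ * R i ω) ∂P
        = (∫ ω, Ni i ω ∂P) + κ * ∫ ω, R i ω ∂P := by
      rw [integral_add (hNiint i) ((hRint i).const_mul κ), integral_const_mul]
    have hmono : (T:ℝ) ≤ ∫ ω, (Ni i ω + κ * R i ω) ∂P := by
      rw [hTint]
      exact integral_mono (integrable_const _) ((hNiint i).add ((hRint i).const_mul κ))
        fun ω => by have := hA' i ω; linarith
    have h1c : 0 ≤ (1 / c) * (T:ℝ) ^ (1-c) := by positivity
    have hκR : κ * ∫ ω, R i ω ∂P = κ0 * (∫ ω, R i ω ∂P) * (T:ℝ) ^ (1-c) := by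
      rw [hκdef]; ring
    show (T : ℝ) - κ0 * (∫ ω, R i ω ∂P) * (T : ℝ) ^ (1 - c)
          - (1 / c) * (T : ℝ) ^ (1 - c) ≤ ∫ ω, Ni i ω ∂P
    linarith [hmono, hint, hκR, h1c]
  · intro Rbar hRbar
    have hRbar0 : 0 ≤ Rbar := le_trans (hERnn ⟨0, by omega⟩) (hRbar ⟨0, by omega⟩)
    have hcnt : ∀ ω, (T:ℝ) - N ω ≤ ∑ i : Fin M, ((T:ℝ) - Ni i ω) := by
      intro ω
      have hsub : ((Finset.Icc 1 T).filter fun t => ¬ ap t ω = adag)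
          ⊆ Finset.univ.biUnion fun i : Fin M =>
              (Finset.Icc 1 T).filter fun t => ¬ ap t ω i = adag i := by
        intro t ht
        rw [Finset.mem_filter] at ht
        obtain ⟨i, hi⟩ := Function.ne_iff.mp ht.2
        exact Finset.mem_biUnion.mpr ⟨i, Finset.mem_univ _,
          Finset.mem_filter.mpr ⟨ht.1, hi⟩⟩
      have hcard : (((Finset.Icc 1 T).filter fun t => ¬ ap t ω = adag).card : ℝ)
          ≤ ∑ i : Fin M, (((Finset.Icc 1 T).filter fun t => ¬ ap t ω i = adag i).card : ℝ) := by
        have := le_trans (Finset.card_le_card hsub) Finset.card_biUnion_le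
        exact_mod_cast this
      have h1 := hpair (fun t => ap t ω = adag) (by infer_instance)
      have h2 : ∀ i : Fin M, (((Finset.Icc 1 T).filter fun t => ¬ ap t ω i = adag i).card : ℝ)
          = (T:ℝ) - Ni i ω := by
        intro i
        have := hpair (fun t => ap t ω i = adag i) (by infer_instance)
        simp only [hNidef]
        linarith [this]
      calc (T:ℝ) - N ω
          = (((Finset.Icc 1 T).filter fun t => ¬ ap t ω = adag).card : ℝ) := by
            simp only [hNdef]; linarith [h1]
        _ ≤ ∑ i : Fin M, (((Finset.Icc 1 T).filter fun t => ¬ ap t ω i = adag i).card : ℝ) :=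
            hcard
        _ = ∑ i : Fin M, ((T:ℝ) - Ni i ω) := Finset.sum_congr rfl fun i _ => h2 i
    have hcnt2 : ∀ ω, (T:ℝ) ≤ N ω + κ * ∑ i : Fin M, R i ω := by
      intro ω
      have h1 := Finset.sum_le_sum fun i (_ : i ∈ Finset.univ) => hA' i ω
      rw [← Finset.mul_sum] at h1
      have := hcnt ω
      linarith
    have hSint : Integrable (fun ω => ∑ i : Fin M, R i ω) P :=
      integrable_finset_sum _ fun i _ => hRint i
    have hmono : (T:ℝ) ≤ ∫ ω, (N ω + κ * ∑ i : Fin M, R i ω) ∂P := by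
      rw [hTint]
      exact integral_mono (integrable_const _) (hNint.add (hSint.const_mul κ))
        fun ω => hcnt2 ω
    have hint : ∫ ω, (N ω + κ * ∑ i : Fin M, R i ω) ∂P
        = (∫ ω, N ω ∂P) + κ * ∑ i : Fin M, ∫ ω, R i ω ∂P := by
      rw [integral_add hNint (hSint.const_mul κ), integral_const_mul,
        integral_finset_sum _ fun i _ => hRint i]
    have hsumle : ∑ i : Fin M, ∫ ω, R i ω ∂P ≤ (M:ℝ) * Rbar := by
      calc ∑ i : Fin M, ∫ ω, R i ω ∂P ≤ ∑ _i : Fin M, Rbar :=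
            Finset.sum_le_sum fun i _ => hRbar i
        _ = (M:ℝ) * Rbar := by
            rw [Finset.sum_const, nsmul_eq_mul, Finset.card_univ, Fintype.card_fin]
    have hfin : κ * ((M:ℝ) * Rbar)
        ≤ (M:ℝ) * (κ0 * Rbar + 1 / c) * (T:ℝ) ^ (1-c) := by
      have h1 : κ * ((M:ℝ) * Rbar) = (M:ℝ) * (κ0 * Rbar) * (T:ℝ) ^ (1-c) := by
        rw [hκdef]; ring
      have h2 : 0 ≤ (M:ℝ) * (1 / c) * (T:ℝ) ^ (1-c) := by positivity
      rw [h1]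
      nlinarith [h2]
    have hκsum : κ * ∑ i : Fin M, ∫ ω, R i ω ∂P ≤ κ * ((M:ℝ) * Rbar) :=
      mul_le_mul_of_nonneg_left hsumle hκpos.le
    show (T:ℝ) - ∫ ω, N ω ∂P ≤ (M:ℝ) * (κ0 * Rbar + 1 / c) * (T:ℝ) ^ (1-c)
    linarith [hmono, hint, hκsum, hfin]
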